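/- Let K be the rn×rn block matrix with identity n×n blocks on the diagonal, blocks K_{i+1,i} = -B_i for i = 1,…,r-1, block K_{1,r} = B_r, and zeros elsewhere, where B₁,…,B_r are arbitrary n×n complex matrices. Then det K = det(I + B_r B_{r-1} ⋯ B_1). -/

import Mathlib

open Matrix

/-- Product of matrices in decreasing index order: `B (r-1) * ⋯ * B 0`. -/
noncomputable def prodDesc {n : Type*} [Fintype n] [DecidableEq n] {r : ℕ}
    (B : Fin r → Matrix n n ℂ) : Matrix n n ℂ :=
  ((List.finRange r).reverse.map B).prod

namespace BCBD

variable {n : Type*} [Fintype n] [DecidableEq n] {r : ℕ}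

/-- `B` extended to `ℕ` by the identity. -/
noncomputable def Bn (B : Fin r → Matrix n n ℂ) (k : ℕ) : Matrix n n ℂ :=
  if h : k < r then B ⟨k, h⟩ else 1

/-- Descending product `B (i-1) * ⋯ * B j`. -/
noncomputable def pD (B : Fin r → Matrix n n ℂ) (j i : ℕ) : Matrix n n ℂ :=
  ((List.range' j (i - j)).reverse.map (Bn B)).prod

lemma pD_self (B : Fin r → Matrix n n ℂ) (j : ℕ) : pD B j j = 1 := by
  simp [pD]

lemma pD_succ (B : Fin r → Matrix n n ℂ) {j i : ℕ} (h : j ≤ i) :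
    pD B j (i + 1) = Bn B i * pD B j i := by
  have h1 : i + 1 - j = (i - j) + 1 := by omega
  have h2 : j + (i - j) = i := by omega
  rw [pD, h1, List.range'_1_concat, h2, List.reverse_append, List.reverse_singleton,
    List.singleton_append, List.map_cons, List.prod_cons]
  rfl

lemma pD_step (B : Fin r → Matrix n n ℂ) {j i : ℕ} (h : j < i) :
    pD B (j + 1) i * Bn B j = pD B j i := by
  have h1 : i - j = (i - (j + 1)) + 1 := by omega
  rw [pD, pD, h1, List.range'_succ, List.reverse_cons, List.map_append, List.prod_append]
  simp

/-- Assemble an `r × r` array of `n × n` blocks into one big matrix. -/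
def asm (A : Fin r → Fin r → Matrix n n ℂ) : Matrix (Fin r × n) (Fin r × n) ℂ :=
  Matrix.of fun p q => A p.1 q.1 p.2 q.2

lemma asm_mul (A C : Fin r → Fin r → Matrix n n ℂ) :
    asm A * asm C = asm fun i j => ∑ k, A i k * C k j := by
  ext p q
  rw [Matrix.mul_apply]
  show (∑ m : Fin r × n, A p.1 m.1 p.2 m.2 * C m.1 q.1 m.2 q.2)
      = (∑ k, A p.1 k * C k q.1) p.2 q.2
  rw [Fintype.sum_prod_type]
  simp only [Matrix.sum_apply]
  exact Finset.sum_congr rfl fun k _ =>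
    (Matrix.mul_apply (M := A p.1 k) (N := C k q.1)).symm

lemma det_asm_blockTriangular {A : Fin r → Fin r → Matrix n n ℂ}
    (h : ∀ i j : Fin r, j < i → A i j = 0) :
    (asm A).det = ∏ k : Fin r, (A k k).det := by
  have hbt : (asm A).BlockTriangular Prod.fst := by
    intro p q hlt
    show A p.1 q.1 p.2 q.2 = 0
    rw [h _ _ hlt]
    rfl
  rw [hbt.det_fintype]
  refine Finset.prod_congr rfl fun k _ => ?_
  let e : n ≃ { p : Fin r × n // p.1 = k } :=
    { toFun := fun x => ⟨(k, x), rfl⟩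
      invFun := fun p => p.1.2
      left_inv := fun x => rfl
      right_inv := fun p => by
        obtain ⟨⟨a, x⟩, hp⟩ := p
        subst hp
        rfl }
  rw [← Matrix.det_submatrix_equiv_self e]
  congr 1

end BCBD

open BCBD in
/-- Determinant of the block cyclic bidiagonal matrix: with identity diagonal blocks,
subdiagonal blocks `-Bᵢ` and corner block `Bᵣ`, one has `det K = det(I + Bᵣ ⋯ B₁)`. -/
theorem block_cyclic_bidiagonal_det {n : Type*} [Fintype n] [DecidableEq n]
    (r : ℕ) (hr : 2 ≤ r) (B : Fin r → Matrix n n ℂ) :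
    let K : Matrix (Fin r × n) (Fin r × n) ℂ :=
      Matrix.of fun p q =>
        if p.1 = q.1 then (1 : Matrix n n ℂ) p.2 q.2
        else if (p.1 : ℕ) = (q.1 : ℕ) + 1 then (-(B q.1)) p.2 q.2
        else if (p.1 : ℕ) = 0 ∧ (q.1 : ℕ) = r - 1 then (B q.1) p.2 q.2
        else 0
    K.det = (1 + prodDesc B).det := by
  intro K
  -- block descriptions
  set Kb : Fin r → Fin r → Matrix n n ℂ := fun i j =>
    if i = j then 1
    else if (i : ℕ) = (j : ℕ) + 1 then -(B j)
    else if (i : ℕ) = 0 ∧ (j : ℕ) = r - 1 then B j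
    else 0 with hKb
  have hK : K = asm Kb := by
    ext p q
    show _ = Kb p.1 q.1 p.2 q.2
    simp only [hKb, K, Matrix.of_apply]
    split_ifs <;> rfl
  set Lb : Fin r → Fin r → Matrix n n ℂ := fun i j =>
    if (j : ℕ) ≤ (i : ℕ) then pD B j i else 0 with hLb
  set Mb : Fin r → Fin r → Matrix n n ℂ := fun i j =>
    (if i = j then 1 else 0) + (if (j : ℕ) = r - 1 then pD B 0 i * B j else 0) with hMb
  have hBn : ∀ j : Fin r, Bn B (j : ℕ) = B j := by
    intro j
    simp [Bn, j.isLt]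
  -- key block computation : L * K = M
  have key : ∀ i j : Fin r, (∑ k : Fin r, Lb i k * Kb k j) = Mb i j := by
    intro i j
    have hsplit : ∀ k : Fin r, Kb k j =
        (if k = j then (1 : Matrix n n ℂ) else 0)
        + (if (k : ℕ) = (j : ℕ) + 1 then -(B j) else 0)
        + (if (k : ℕ) = 0 ∧ (j : ℕ) = r - 1 then B j else 0) := by
      intro k
      by_cases h1 : k = j
      · subst h1
        have h2 : ¬ ((k : ℕ) = (k : ℕ) + 1) := by omega
        have h3 : ¬ ((k : ℕ) = 0 ∧ (k : ℕ) = r - 1) := by omega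
        simp [hKb, h2, h3]
      · by_cases h2 : (k : ℕ) = (j : ℕ) + 1
        · have h3 : ¬ ((k : ℕ) = 0 ∧ (j : ℕ) = r - 1) := by omega
          simp [hKb, h1, h2, h3]
        · simp [hKb, h1, h2]
    have expand : (∑ k : Fin r, Lb i k * Kb k j) =
        Lb i j
        + (∑ k : Fin r, if (k : ℕ) = (j : ℕ) + 1 then Lb i k * (-(B j)) else 0)
        + (∑ k : Fin r, if (k : ℕ) = 0 ∧ (j : ℕ) = r - 1 then Lb i k * B j else 0) := by
      have e1 : ∀ k : Fin r, Lb i k * Kb k j =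
          (if k = j then Lb i k else 0)
          + (if (k : ℕ) = (j : ℕ) + 1 then Lb i k * (-(B j)) else 0)
          + (if (k : ℕ) = 0 ∧ (j : ℕ) = r - 1 then Lb i k * B j else 0) := by
        intro k
        rw [hsplit k, Matrix.mul_add, Matrix.mul_add]
        congr 1
        · congr 1
          · split_ifs with h <;> simp
          · split_ifs <;> simp
        · split_ifs <;> simp
      rw [Finset.sum_congr rfl fun k _ => e1 k, Finset.sum_add_distrib,
        Finset.sum_add_distrib, Finset.sum_ite_eq' Finset.univ j (fun k => Lb i k)]
      simp
    rw [expand]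
    by_cases hj : (j : ℕ) = r - 1
    · -- last column
      have h2 : (∑ k : Fin r, if (k : ℕ) = (j : ℕ) + 1 then Lb i k * (-(B j)) else 0) = 0 := by
        refine Finset.sum_eq_zero fun k _ => ?_
        have : ¬ ((k : ℕ) = (j : ℕ) + 1) := by have := k.isLt; omega
        simp [this]
      have h3 : (∑ k : Fin r, if (k : ℕ) = 0 ∧ (j : ℕ) = r - 1 then Lb i k * B j else 0)
          = Lb i ⟨0, by omega⟩ * B j := by
        rw [Finset.sum_eq_single (⟨0, by omega⟩ : Fin r)]
        · simp [hj]
        · intro k _ hk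
          have : ¬ ((k : ℕ) = 0) := fun h => hk (Fin.ext h)
          simp [this]
        · simp
      rw [h2, h3]
      simp only [hMb]
      have hL0 : Lb i ⟨0, by omega⟩ = pD B 0 i := by
        simp only [hLb]
        rw [if_pos (Nat.zero_le _)]
      have hLij : Lb i j = if i = j then 1 else 0 := by
        simp only [hLb]
        by_cases hij : i = j
        · simp [hij, pD_self]
        · have : ¬ ((j : ℕ) ≤ (i : ℕ)) := by
            have h1 := i.isLt
            have h2 : (i : ℕ) ≠ (j : ℕ) := fun h => hij (Fin.ext h)
            omega
          simp [this, hij]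
      simp [hLij, hL0, hj]
    · -- not the last column
      have hj1 : (j : ℕ) + 1 < r := by have := j.isLt; omega
      have h3 : (∑ k : Fin r, if (k : ℕ) = 0 ∧ (j : ℕ) = r - 1 then Lb i k * B j else 0) = 0 := by
        refine Finset.sum_eq_zero fun k _ => ?_
        simp [hj]
      have h2 : (∑ k : Fin r, if (k : ℕ) = (j : ℕ) + 1 then Lb i k * (-(B j)) else 0)
          = Lb i ⟨(j : ℕ) + 1, hj1⟩ * (-(B j)) := by
        rw [Finset.sum_eq_single (⟨(j : ℕ) + 1, hj1⟩ : Fin r)]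
        · simp
        · intro k _ hk
          have : ¬ ((k : ℕ) = (j : ℕ) + 1) := fun h => hk (Fin.ext h)
          simp [this]
        · simp
      rw [h2, h3, add_zero]
      simp only [hMb, hj, if_false, add_zero]
      rcases lt_trichotomy ((i : ℕ)) ((j : ℕ)) with hij | hij | hij
      · have hne : i ≠ j := fun h => by rw [h] at hij; omega
        simp only [hLb]
        have hc1 : ¬ ((j : ℕ) ≤ (i : ℕ)) := by omega
        have hc2 : ¬ ((j : ℕ) + 1 ≤ (i : ℕ)) := by omega
        simp [hc1, hc2, hne]
      · have heq : i = j := Fin.ext hij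
        subst heq
        simp only [hLb]
        have hc2 : ¬ ((i : ℕ) + 1 ≤ (i : ℕ)) := by omega
        simp [hc2, pD_self]
      · have hne : i ≠ j := fun h => by rw [h] at hij; omega
        simp only [hLb]
        have hc1 : (j : ℕ) ≤ (i : ℕ) := by omega
        have hc2 : (j : ℕ) + 1 ≤ (i : ℕ) := by omega
        simp only [hc1, hc2, if_true, hne, if_false]
        rw [Matrix.mul_neg, ← sub_eq_add_neg, sub_eq_zero, ← pD_step B hij, hBn]
  have hdetL : (asm Lb).det = 1 := by
    rw [← Matrix.det_transpose]
    have ht : (asm Lb)ᵀ = asm fun i j => (Lb j i)ᵀ := by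
      ext p q
      rfl
    rw [ht, det_asm_blockTriangular]
    · refine Finset.prod_eq_one fun k _ => ?_
      have hk : Lb k k = 1 := by simp [hLb, pD_self]
      rw [hk]
      simp
    · intro i j hij
      have hz : Lb j i = 0 := by
        simp only [hLb]
        have hc : ¬ ((i : ℕ) ≤ (j : ℕ)) := by exact_mod_cast not_le.mpr hij
        simp [hc]
      rw [hz]
      exact Matrix.transpose_zero
  have hdetM : (asm Mb).det = (1 + pD B 0 (r - 1) * B ⟨r - 1, by omega⟩).det := by
    rw [det_asm_blockTriangular]
    · rw [Finset.prod_eq_single (⟨r - 1, by omega⟩ : Fin r)]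
      · simp [hMb]
      · intro k _ hk
        have : ¬ ((k : ℕ) = r - 1) := fun h => hk (Fin.ext h)
        simp [hMb, this]
      · simp
    · intro i j hij
      have hne : i ≠ j := ne_of_gt hij
      have hjr : ¬ ((j : ℕ) = r - 1) := by
        have h1 := i.isLt
        have h2 : (j : ℕ) < (i : ℕ) := hij
        omega
      simp [hMb, hne, hjr]
  have hmul : asm Lb * K = asm Mb := by
    rw [hK, asm_mul]
    have h : (fun i j => ∑ k : Fin r, Lb i k * Kb k j) = Mb :=
      funext fun i => funext fun j => key i j
    rw [h]
  have hdet : K.det = (asm Mb).det := by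
    have h := congrArg Matrix.det hmul
    rwa [Matrix.det_mul, hdetL, one_mul] at h
  have hcomm := Matrix.det_one_add_mul_comm (pD B 0 (r - 1)) (B ⟨r - 1, by omega⟩)
  have hlast : Bn B (r - 1) = B ⟨r - 1, by omega⟩ := by
    simp only [Bn]
    rw [dif_pos (by omega)]
  have hstep : pD B 0 r = B ⟨r - 1, by omega⟩ * pD B 0 (r - 1) := by
    have h2 := pD_succ B (Nat.zero_le (r - 1))
    rw [hlast] at h2
    have h3 : r - 1 + 1 = r := by omega
    rw [h3] at h2
    exact h2
  have hPd : prodDesc B = pD B 0 r := by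
    unfold prodDesc pD
    rw [Nat.sub_zero, ← List.range_eq_range', ← (show (List.finRange r).map Fin.val = List.range r from
        List.ext_getElem (by simp) (by simp)), List.map_reverse,
      List.map_reverse, List.map_map]
    congr 1
    congr 1
    exact List.map_congr_left fun k _ => (hBn k).symm
  rw [hdet, hdetM, hcomm, hPd, hstep]
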